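/- Let d ≥ 1, let 0 ≤ j < i ≤ d − 1 be integers, let ε > 0 and T ≥ 0, and set l_i := (d − i)·ε and l_{i−1} := (d − i + 1)·ε. Let Q₁ := [0, T]^i × {0}^{d−i}, Q := [0, T]^j × {0}^{d−j}, and let I := ℝ^j × {0}^{d−j} (the span of e₁, …, e_j). Let N_i^∞(A) denote the ℓ∞-neighborhood of A of radius l_i and N_{i−1}^∞(A) the ℓ∞-neighborhood of radius l_{i−1}. Then N_i^∞(Q₁) \ N_{i−1}^∞(Q) = N_i^∞(Q₁) \ N_{i−1}^∞(I). -/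

import Mathlib

/-- The box `[0, T]^m × {0}^{d−m}` in `ℝ^d`. -/
def box (d : ℕ) (T : ℝ) (m : ℕ) : Set (EuclideanSpace ℝ (Fin d)) :=
  {x | (∀ k : Fin d, (k : ℕ) < m → 0 ≤ x k ∧ x k ≤ T) ∧
       ∀ k : Fin d, m ≤ (k : ℕ) → x k = 0}

/-- The coordinate subspace `ℝ^m × {0}^{d−m}`, i.e. the span of `e₁, …, e_m`. -/
def lowSubspace (d : ℕ) (m : ℕ) : Set (EuclideanSpace ℝ (Fin d)) :=
  {x | ∀ k : Fin d, m ≤ (k : ℕ) → x k = 0}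

/-- The `ℓ∞`-neighborhood of radius `l` of a set `S ⊆ ℝ^d`. -/
def linfNbhd (d : ℕ) (l : ℝ) (S : Set (EuclideanSpace ℝ (Fin d))) :
    Set (EuclideanSpace ℝ (Fin d)) :=
  {x | ∃ a ∈ S, ∀ k, |x k - a k| ≤ l}

/-- Let `0 ≤ j < i ≤ d−1`, `ε > 0`, `T ≥ 0`,
`l_i := (d−i)ε`, `l_{i−1} := (d−i+1)ε`, `Q₁ := [0,T]^i × {0}^{d−i}`,
`Q := [0,T]^j × {0}^{d−j}`, and `I := ℝ^j × {0}^{d−j}`. Then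
`N_i^∞(Q₁) \ N_{i−1}^∞(Q) = N_i^∞(Q₁) \ N_{i−1}^∞(I)`. -/
theorem stmt_11 (d : ℕ) (hd : 1 ≤ d) (i j : ℕ) (hj : j < i) (hi : i ≤ d - 1)
    (ε T : ℝ) (hε : 0 < ε) (hT : 0 ≤ T) :
    linfNbhd d (((d : ℝ) - i) * ε) (box d T i) \
        linfNbhd d (((d : ℝ) - i + 1) * ε) (box d T j) =
      linfNbhd d (((d : ℝ) - i) * ε) (box d T i) \
        linfNbhd d (((d : ℝ) - i + 1) * ε) (lowSubspace d j) := by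
  have hid : (i : ℝ) < (d : ℝ) := by
    have : i < d := by omega
    exact_mod_cast this
  have hli : 0 ≤ ((d : ℝ) - i) * ε := by
    apply mul_nonneg (by linarith) hε.le
  ext x
  simp only [Set.mem_diff]
  constructor
  · rintro ⟨hx1, hx2⟩
    refine ⟨hx1, fun ⟨b, hb, hbx⟩ => hx2 ?_⟩
    obtain ⟨a, ⟨ha1, ha2⟩, hax⟩ := hx1
    refine ⟨WithLp.toLp 2 (fun k : Fin d => if (k : ℕ) < j then max 0 (min (b k) T) else 0),
      ⟨fun k hk => ?_, fun k hk => by simp [Nat.not_lt.mpr hk]⟩, fun k => ?_⟩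
    · simp only [if_pos hk]
      exact ⟨le_max_left _ _, max_le hT (min_le_right _ _)⟩
    · by_cases hk : (k : ℕ) < j
      · simp only [if_pos hk]
        have hak := ha1 k (hk.trans hj)
        have haxk := hax k
        have hbxk := hbx k
        have h1 : ((d : ℝ) - i) * ε ≤ ((d : ℝ) - i + 1) * ε := by nlinarith
        rcases le_or_gt (b k) 0 with hb0 | hb0
        · rcases le_or_gt (b k) T with hbT | hbT
          · rw [min_eq_left hbT, max_eq_left hb0, abs_le]
            rw [abs_le] at haxk hbxk
            constructor <;> [nlinarith; nlinarith]
          · rw [min_eq_right hbT.le, max_eq_right hT, abs_le]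
            rw [abs_le] at haxk hbxk
            constructor <;> nlinarith
        · rcases le_or_gt (b k) T with hbT | hbT
          · rw [min_eq_left hbT, max_eq_right hb0.le]
            exact hbxk
          · rw [min_eq_right hbT.le, max_eq_right hT, abs_le]
            rw [abs_le] at haxk hbxk
            constructor <;> nlinarith
      · simp only [if_neg hk]
        have := hbx k
        rwa [hb k (Nat.not_lt.mp hk)] at this
  · rintro ⟨hx1, hx2⟩
    refine ⟨hx1, fun ⟨b, hb, hbx⟩ => hx2 ⟨b, fun k hk => hb.2 k hk, hbx⟩⟩
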